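/- Let H be a separable complex Hilbert space with orthonormal basis (ψ_k)_{k∈ℕ}, let (X, μ) be a measure space, and let (f_k)_{k∈ℕ} be measurable functions forming an orthogonal family of nonzero elements of L²(X, μ), with ρ_k = ‖f_k‖²_{L²(X,μ)}. Assume ω(u) := Σ_{k=0}^∞ |f_k(u)|²/ρ_k satisfies 0 < ω(u) < ∞ for every u ∈ X, and for each u ∈ X define the coherent state Ψ_u := ω(u)^{−1/2} Σ_{k=0}^∞ (f_k(u)/ρ_k^{1/2}) ψ_k ∈ H. Then the following resolution of the identity holds: for all f, g ∈ H, ∫_X ⟨g, Ψ_u⟩ ⟨Ψ_u, f⟩ ω(u) dμ(u) = ⟨g, f⟩. -/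

import Mathlib

open MeasureTheory Complex Real Set Filter
open scoped ENNReal NNReal

noncomputable section

private lemma summable_mul_of_sq_summable {a c : ℕ → ℂ}
    (ha : Summable fun k => ‖a k‖ ^ 2) (hc : Summable fun k => ‖c k‖ ^ 2) :
    Summable fun k => a k * c k := by
  refine Summable.of_norm (Summable.of_nonneg_of_le (fun k => norm_nonneg _) (fun k => ?_)
    ((ha.add hc).div_const 2))
  rw [norm_mul]
  nlinarith [norm_nonneg (a k), norm_nonneg (c k), sq_nonneg (‖a k‖ - ‖c k‖)]

private lemma lp_tsum_ae_eq {X : Type*} [MeasurableSpace X] {μ : Measure X}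
    {e : ℕ → X → ℂ} (he : ∀ k, MemLp (e k) 2 μ) (c : ℕ → ℂ)
    (hsum : Summable fun k => c k • ((he k).toLp (e k)))
    (hpt : ∀ u, Summable fun k => c k * e k u) :
    ((∑' k, c k • ((he k).toLp (e k)) : Lp ℂ 2 μ) : X → ℂ)
      =ᵐ[μ] fun u => ∑' k, c k * e k u := by
  set F : Lp ℂ 2 μ := ∑' k, c k • ((he k).toLp (e k)) with hF
  have htend : Tendsto (fun n => ∑ k ∈ Finset.range n, c k • ((he k).toLp (e k)))
      atTop (nhds F) := hsum.hasSum.tendsto_sum_nat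
  have hmeas := tendstoInMeasure_of_tendsto_Lp htend
  obtain ⟨ns, hns, hae⟩ := hmeas.exists_seq_tendsto_ae
  have hScoe : ∀ n, ((∑ k ∈ Finset.range n, c k • ((he k).toLp (e k)) : Lp ℂ 2 μ) : X → ℂ)
      =ᵐ[μ] fun u => ∑ k ∈ Finset.range n, c k * e k u := by
    intro n
    induction n with
    | zero =>
      simp only [Finset.range_zero, Finset.sum_empty]
      exact Lp.coeFn_zero ℂ 2 μ
    | succ n ih =>
      have h1 := Lp.coeFn_add (∑ k ∈ Finset.range n, c k • ((he k).toLp (e k)))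
        (c n • ((he n).toLp (e n)))
      have h2 := Lp.coeFn_smul (c n) ((he n).toLp (e n))
      have h3 := (he n).coeFn_toLp
      rw [Finset.sum_range_succ]
      filter_upwards [h1, h2, h3, ih] with u hu1 hu2 hu3 hu4
      rw [Finset.sum_range_succ, hu1, Pi.add_apply, hu4, hu2, Pi.smul_apply, hu3]
      simp [smul_eq_mul]
  have h := MeasureTheory.ae_all_iff.2 hScoe
  filter_upwards [hae, h] with u hu1 hu2
  have hlim1 : Tendsto (fun i => ∑ k ∈ Finset.range (ns i), c k * e k u)
      atTop (nhds (F u)) := by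
    have : (fun i => ∑ k ∈ Finset.range (ns i), c k * e k u)
        = fun i => ((∑ k ∈ Finset.range (ns i), c k • ((he k).toLp (e k)) : Lp ℂ 2 μ) : X → ℂ) u := by
      funext i; exact (hu2 (ns i)).symm
    rw [this]; exact hu1
  have hlim2 : Tendsto (fun i => ∑ k ∈ Finset.range (ns i), c k * e k u)
      atTop (nhds (∑' k, c k * e k u)) :=
    ((hpt u).hasSum.tendsto_sum_nat).comp hns.tendsto_atTop
  exact tendsto_nhds_unique hlim1 hlim2

/-- resolution of the identity for the coherent states
`Ψ_u = ω(u)^{-1/2} Σ_k (f_k(u)/√ρ_k) ψ_k`. -/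
theorem stmt14 {H : Type*} [NormedAddCommGroup H] [InnerProductSpace ℂ H]
    [CompleteSpace H] {X : Type*} [MeasurableSpace X] (μ : MeasureTheory.Measure X)
    (ψ : ℕ → H) (hψon : Orthonormal ℂ ψ)
    (hψtot : (Submodule.span ℂ (Set.range ψ)).topologicalClosure = ⊤)
    (f : ℕ → X → ℂ) (hf : ∀ k, MeasureTheory.MemLp (f k) 2 μ)
    (ρ : ℕ → ℝ) (hρ : ∀ k, ρ k = ∫ x, ‖f k x‖ ^ 2 ∂μ) (hρpos : ∀ k, 0 < ρ k)
    (horth : ∀ j k, j ≠ k → ∫ x, f j x * (starRingEnd ℂ) (f k x) ∂μ = 0)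
    (hω : ∀ u, Summable (fun k => ‖f k u‖ ^ 2 / ρ k))
    (hωpos : ∀ u, 0 < ∑' k : ℕ, ‖f k u‖ ^ 2 / ρ k)
    (Psi : X → H)
    (hPsi : ∀ u, Psi u = ((Real.sqrt (∑' k : ℕ, ‖f k u‖ ^ 2 / ρ k))⁻¹ : ℂ) •
        ∑' k : ℕ, (f k u / (Real.sqrt (ρ k) : ℂ)) • ψ k) :
    ∀ fv g : H,
      ∫ u, (inner ℂ g (Psi u) : ℂ) * (inner ℂ (Psi u) fv : ℂ) *
          (((∑' k : ℕ, ‖f k u‖ ^ 2 / ρ k : ℝ)) : ℂ) ∂μ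
        = (inner ℂ g fv : ℂ) := by
  intro fv g
  -- the normalized functions
  set e : ℕ → X → ℂ := fun k u => f k u / (Real.sqrt (ρ k) : ℂ) with he_def
  have henorm : ∀ k u, ‖e k u‖ ^ 2 = ‖f k u‖ ^ 2 / ρ k := by
    intro k u
    rw [he_def]
    rw [norm_div, div_pow, Complex.norm_real, Real.norm_eq_abs, _root_.sq_abs,
      Real.sq_sqrt (hρpos k).le]
  have hep : ∀ k, MemLp (e k) 2 μ := by
    intro k
    simpa [he_def, div_eq_inv_mul] using (hf k).const_mul (((Real.sqrt (ρ k) : ℝ) : ℂ)⁻¹)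
  set E : ℕ → Lp ℂ 2 μ := fun k => (hep k).toLp (e k) with hE_def
  -- inner ℂ products of the E's
  have hEinner : ∀ j k, (inner ℂ (E j) (E k) : ℂ) = ∫ u, (starRingEnd ℂ) (e j u) * e k u ∂μ := by
    intro j k
    rw [MeasureTheory.L2.inner_def]
    apply integral_congr_ae
    filter_upwards [(hep j).coeFn_toLp, (hep k).coeFn_toLp] with u h1 h2
    simp only [hE_def]
    rw [h1, h2, RCLike.inner_apply]
    exact mul_comm _ _
  have hEon : Orthonormal ℂ E := by
    rw [orthonormal_iff_ite]
    intro j k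
    rw [hEinner j k]
    by_cases hjk : j = k
    · subst hjk
      simp only [if_pos rfl]
      have hptd : ∀ u, (starRingEnd ℂ) (e j u) * e j u = ((‖f j u‖ ^ 2 / ρ j : ℝ) : ℂ) := by
        intro u
        rw [mul_comm, Complex.mul_conj]
        norm_cast
        rw [Complex.normSq_eq_norm_sq]
        exact henorm j u
      simp only [hptd, if_true]
      have hioR : ∫ u, ((‖f j u‖ ^ 2 / ρ j : ℝ) : ℂ) ∂μ
          = ((∫ u, ‖f j u‖ ^ 2 / ρ j ∂μ : ℝ) : ℂ) := integral_ofReal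
      rw [hioR, MeasureTheory.integral_div, ← hρ j, div_self (hρpos j).ne']
      norm_num
    · simp only [if_neg hjk]
      have hptd : ∀ u, (starRingEnd ℂ) (e j u) * e k u
          = (((Real.sqrt (ρ j) : ℂ)) * ((Real.sqrt (ρ k) : ℂ)))⁻¹
            * (f k u * (starRingEnd ℂ) (f j u)) := by
        intro u
        rw [he_def]
        simp only [map_div₀, Complex.conj_ofReal]
        rw [div_mul_div_comm, div_eq_inv_mul]
        ring_nf
      simp only [hptd]
      rw [MeasureTheory.integral_const_mul, horth k j (Ne.symm hjk), mul_zero]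
  -- Hilbert basis
  set b : HilbertBasis ℕ ℂ H := HilbertBasis.mk hψon (le_of_eq hψtot.symm) with hb_def
  have hb : ⇑b = ψ := HilbertBasis.coe_mk _ _
  -- Bessel
  have hcoef : ∀ x : H, Summable fun k => ‖(inner ℂ x (ψ k) : ℂ)‖ ^ 2 := by
    intro x
    have h := (lp.memℓp (b.repr x)).summable (p := 2) (by norm_num)
    refine h.congr fun k => ?_
    rw [show ((2 : ℝ≥0∞)).toReal = (2 : ℝ) by norm_num,
      show (‖b.repr x k‖ : ℝ) ^ (2:ℝ) = ‖b.repr x k‖ ^ 2 by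
        rw [← Real.rpow_natCast ‖b.repr x k‖ 2]; norm_num,
      HilbertBasis.repr_apply_apply]
    rw [hb, ← norm_inner_symm]
  have hesq : ∀ u, Summable fun k => ‖e k u‖ ^ 2 := by
    intro u
    simpa only [henorm] using hω u
  -- pointwise summability
  have hptg : ∀ u, Summable fun k => (inner ℂ g (ψ k) : ℂ) * e k u :=
    fun u => summable_mul_of_sq_summable (hcoef g) (hesq u)
  have hptf : ∀ u, Summable fun k => (inner ℂ fv (ψ k) : ℂ) * e k u :=
    fun u => summable_mul_of_sq_summable (hcoef fv) (hesq u)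
  -- summability in H
  have hsumH : ∀ u, Summable fun k => (e k u) • ψ k := by
    intro u
    have h := (hψon.orthogonalFamily.summable_iff_norm_sq_summable (fun k => e k u)).2
      (by simpa only [henorm] using hω u)
    simpa only [LinearIsometry.toSpanSingleton_apply] using h
  -- summability in Lp
  have hsumE : ∀ c : ℕ → ℂ, (Summable fun k => ‖c k‖ ^ 2) →
      Summable fun k => c k • E k := by
    intro c hc
    have h := (hEon.orthogonalFamily.summable_iff_norm_sq_summable c).2 hc
    simpa only [LinearIsometry.toSpanSingleton_apply] using h
  have hsumg : Summable fun k => (inner ℂ g (ψ k) : ℂ) • E k := hsumE _ (hcoef g)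
  have hsumf : Summable fun k => (inner ℂ fv (ψ k) : ℂ) • E k := hsumE _ (hcoef fv)
  set Gp : Lp ℂ 2 μ := ∑' k, (inner ℂ g (ψ k) : ℂ) • E k with hGp_def
  set Fp : Lp ℂ 2 μ := ∑' k, (inner ℂ fv (ψ k) : ℂ) • E k with hFp_def
  set A : X → ℂ := fun u => ∑' k, (inner ℂ g (ψ k) : ℂ) * e k u with hA_def
  set B : X → ℂ := fun u => ∑' k, (inner ℂ fv (ψ k) : ℂ) * e k u with hB_def
  have hGcoe : (Gp : X → ℂ) =ᵐ[μ] A := lp_tsum_ae_eq hep _ hsumg hptg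
  have hFcoe : (Fp : X → ℂ) =ᵐ[μ] B := lp_tsum_ae_eq hep _ hsumf hptf
  -- the inner ℂ product of Fp and Gp
  have hFG : (inner ℂ Fp Gp : ℂ) = ∑' k, (inner ℂ g (ψ k) : ℂ) *
      (starRingEnd ℂ) (inner ℂ fv (ψ k) : ℂ) := by
    have h0 : (inner ℂ Fp Gp : ℂ) = ∑' k, (inner ℂ g (ψ k) : ℂ) * (inner ℂ Fp (E k) : ℂ) := by
      rw [hGp_def,
        show (inner ℂ Fp (∑' k, (inner ℂ g (ψ k) : ℂ) • E k) : ℂ)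
          = innerSL ℂ Fp (∑' k, (inner ℂ g (ψ k) : ℂ) • E k) from rfl,
        ContinuousLinearMap.map_tsum _ hsumg]
      exact tsum_congr fun k => by rw [innerSL_apply_apply, inner_smul_right]
    have h2 : ∀ k, (inner ℂ (E k) Fp : ℂ) = (inner ℂ fv (ψ k) : ℂ) := by
      intro k
      rw [hFp_def,
        show (inner ℂ (E k) (∑' j, (inner ℂ fv (ψ j) : ℂ) • E j) : ℂ)
          = innerSL ℂ (E k) (∑' j, (inner ℂ fv (ψ j) : ℂ) • E j) from rfl,
        ContinuousLinearMap.map_tsum _ hsumf]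
      rw [tsum_eq_single k ?_]
      · rw [innerSL_apply_apply, inner_smul_right, orthonormal_iff_ite.1 hEon, if_pos rfl, mul_one]
      · intro j hj
        rw [innerSL_apply_apply, inner_smul_right, orthonormal_iff_ite.1 hEon, if_neg, mul_zero]
        exact fun hkj => hj hkj.symm
    have h1 : ∀ k, (inner ℂ Fp (E k) : ℂ) = (starRingEnd ℂ) (inner ℂ fv (ψ k) : ℂ) := by
      intro k
      calc (inner ℂ Fp (E k) : ℂ) = (starRingEnd ℂ) (inner ℂ (E k) Fp : ℂ) :=
            (inner_conj_symm _ _).symm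
        _ = (starRingEnd ℂ) (inner ℂ fv (ψ k) : ℂ) := by rw [h2 k]
    rw [h0]
    exact tsum_congr fun k => by rw [h1 k]
  have hParseval : (inner ℂ g fv : ℂ) = ∑' k, (inner ℂ g (ψ k) : ℂ) *
      (starRingEnd ℂ) (inner ℂ fv (ψ k) : ℂ) := by
    rw [← b.tsum_inner_mul_inner g fv]
    refine tsum_congr fun k => ?_
    rw [hb]
    congr 1
    exact (inner_conj_symm _ _).symm
  have hFGint : (inner ℂ Fp Gp : ℂ) = ∫ u, (starRingEnd ℂ) (B u) * A u ∂μ := by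
    rw [MeasureTheory.L2.inner_def]
    apply integral_congr_ae
    filter_upwards [hFcoe, hGcoe] with u h1 h2
    rw [RCLike.inner_apply, h1, h2]
    exact mul_comm _ _
  have hpointwise : ∀ u, (inner ℂ g (Psi u) : ℂ) * (inner ℂ (Psi u) fv : ℂ) *
      (((∑' k : ℕ, ‖f k u‖ ^ 2 / ρ k : ℝ)) : ℂ) = (starRingEnd ℂ) (B u) * A u := by
    intro u
    set w : ℝ := ∑' k : ℕ, ‖f k u‖ ^ 2 / ρ k with hw
    have hvsum := hsumH u
    have hgA : (inner ℂ g (∑' k, (e k u) • ψ k) : ℂ) = A u := by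
      rw [show (inner ℂ g (∑' k, (e k u) • ψ k) : ℂ)
          = innerSL ℂ g (∑' k, (e k u) • ψ k) from rfl,
        ContinuousLinearMap.map_tsum _ hvsum, hA_def]
      exact tsum_congr fun k => by rw [innerSL_apply_apply, inner_smul_right, mul_comm]
    have hfB0 : (inner ℂ fv (∑' k, (e k u) • ψ k) : ℂ) = B u := by
      rw [show (inner ℂ fv (∑' k, (e k u) • ψ k) : ℂ)
          = innerSL ℂ fv (∑' k, (e k u) • ψ k) from rfl,
        ContinuousLinearMap.map_tsum _ hvsum, hB_def]
      exact tsum_congr fun k => by rw [innerSL_apply_apply, inner_smul_right, mul_comm]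
    have hfB : (inner ℂ (∑' k, (e k u) • ψ k) fv : ℂ) = (starRingEnd ℂ) (B u) := by
      calc (inner ℂ (∑' k, (e k u) • ψ k) fv : ℂ)
          = (starRingEnd ℂ) (inner ℂ fv (∑' k, (e k u) • ψ k) : ℂ) :=
            (inner_conj_symm _ _).symm
        _ = (starRingEnd ℂ) (B u) := by rw [hfB0]
    rw [hPsi u, inner_smul_right, inner_smul_left]
    rw [show (∑' k, (f k u / (Real.sqrt (ρ k) : ℂ)) • ψ k) = ∑' k, (e k u) • ψ k from rfl]
    rw [hgA, hfB]
    have hconj : (starRingEnd ℂ) (((Real.sqrt w : ℝ) : ℂ))⁻¹ = (((Real.sqrt w : ℝ) : ℂ))⁻¹ := by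
      rw [map_inv₀, Complex.conj_ofReal]
    have h1 : (((Real.sqrt w : ℝ) : ℂ))⁻¹ * (((Real.sqrt w : ℝ) : ℂ))⁻¹ * ((w : ℝ) : ℂ) = 1 := by
      have hwpos : 0 < w := by rw [hw]; exact hωpos u
      have hs : Real.sqrt w ≠ 0 := (Real.sqrt_pos.2 hwpos).ne'
      rw [← Complex.ofReal_inv, ← Complex.ofReal_mul, ← Complex.ofReal_mul,
        ← Complex.ofReal_one]
      congr 1
      field_simp
      exact (Real.sq_sqrt hwpos.le).symm
    rw [hconj]
    linear_combination (A u * (starRingEnd ℂ) (B u)) * h1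
  calc ∫ u, (inner ℂ g (Psi u) : ℂ) * (inner ℂ (Psi u) fv : ℂ) *
          (((∑' k : ℕ, ‖f k u‖ ^ 2 / ρ k : ℝ)) : ℂ) ∂μ
      = ∫ u, (starRingEnd ℂ) (B u) * A u ∂μ := by
        exact integral_congr_ae (Filter.Eventually.of_forall hpointwise)
    _ = (inner ℂ Fp Gp : ℂ) := hFGint.symm
    _ = (inner ℂ g fv : ℂ) := by rw [hFG, hParseval]

end
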